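/- Let α > 0, A antisymmetric, and let C : [0,∞) → ℝⁿ (reparametrized by σ with dC/dσ = ‖a‖ dC/ds) satisfy dC/dσ = (α+A)C + g(σ) where ‖g(σ)‖ ≤ K e^{-ασ} for some constant K. Then the limit Γ = lim_{σ→∞} e^{-σ(α+A)} C(σ) exists and ‖C(σ) - e^{σ(α+A)} Γ‖ ≤ (K/(2α)) e^{-ασ} for all σ ≥ 0. -/

import Mathlib

open Matrix Filter MeasureTheory Set

noncomputable instance myRatAlgCLM {E : Type*} [NormedAddCommGroup E] [NormedSpace ℝ E] :
    NormedAlgebra ℚ (E →L[ℝ] E) :=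
  NormedAlgebra.restrictScalars ℚ ℝ (E →L[ℝ] E)

section ScopedAux
open scoped Matrix.Norms.L2Operator

lemma myExpBridge (n : ℕ) (M : Matrix (Fin n) (Fin n) ℝ) :
    Matrix.toEuclideanCLM (𝕜 := ℝ) (n := Fin n) (NormedSpace.exp M)
      = NormedSpace.exp (Matrix.toEuclideanCLM (𝕜 := ℝ) (n := Fin n) M) := by
  let +nondep : NormedAlgebra ℚ (Matrix (Fin n) (Fin n) ℝ) := .restrictScalars ℚ ℝ _
  refine NormedSpace.map_exp _ ?_ M
  exact AddMonoidHomClass.continuous_of_bound _ 1 (fun x => by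
    rw [one_mul, ← Matrix.cstar_norm_def])

end ScopedAux

lemma myExpApply (n : ℕ) (M : Matrix (Fin n) (Fin n) ℝ) (v : EuclideanSpace ℝ (Fin n)) :
    Matrix.toEuclideanLin (NormedSpace.exp M) v
      = NormedSpace.exp (Matrix.toEuclideanCLM (𝕜 := ℝ) (n := Fin n) M) v :=
  DFunLike.congr_fun (myExpBridge n M) v

lemma myUnitaryNorm {E : Type*} [NormedAddCommGroup E] [InnerProductSpace ℝ E]
    [CompleteSpace E] (S : E →L[ℝ] E) (hS : star S = -S) (v : E) :
    ‖NormedSpace.exp S v‖ = ‖v‖ := by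
  set U := NormedSpace.exp S with hU
  have h1 : star U * U = 1 := by
    rw [hU, NormedSpace.star_exp, hS,
      ← NormedSpace.exp_add_of_commute ((Commute.refl S).neg_left), neg_add_cancel,
      NormedSpace.exp_zero]
  have h2 : (ContinuousLinearMap.adjoint U) (U v) = v := by
    rw [← ContinuousLinearMap.star_eq_adjoint]
    have := congrArg (fun f : E →L[ℝ] E => f v) h1
    simpa using this
  have h3 : inner ℝ (U v) (U v) = inner ℝ v v := by
    rw [← ContinuousLinearMap.adjoint_inner_right, h2]
  have h4 : ‖U v‖ * ‖U v‖ = ‖v‖ * ‖v‖ := by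
    rw [← real_inner_self_eq_norm_mul_norm, ← real_inner_self_eq_norm_mul_norm]; exact h3
  exact (mul_self_inj (norm_nonneg _) (norm_nonneg _)).mp h4

lemma myExpSmulOne {E : Type*} [NormedAddCommGroup E] [NormedSpace ℝ E] [CompleteSpace E]
    (c : ℝ) :
    NormedSpace.exp (c • (1 : E →L[ℝ] E)) = Real.exp c • 1 := by
  have h : (c • (1 : E →L[ℝ] E)) = algebraMap ℝ (E →L[ℝ] E) c :=
    (Algebra.algebraMap_eq_smul_one c).symm
  rw [h, ← NormedSpace.map_exp (algebraMap ℝ (E →L[ℝ] E)) (continuous_algebraMap ℝ _) c,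
    Real.exp_eq_exp_ℝ, Algebra.algebraMap_eq_smul_one]


-- exp integral
lemma myExpIntegral {b : ℝ} (hb : 0 < b) (a : ℝ) :
    ∫ τ in Ioi a, Real.exp (-b * τ) = Real.exp (-b * a) / b := by
  have hderiv : ∀ x ∈ Ici a, HasDerivAt (fun τ => -(Real.exp (-b * τ) / b))
      (Real.exp (-b * x)) x := by
    intro x _
    have h1 : HasDerivAt (fun τ : ℝ => -b * τ) (-b) x := by
      simpa using (hasDerivAt_id x).const_mul (-b)
    have h2 := (h1.exp.div_const b).neg
    refine h2.congr_deriv ?_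
    rw [mul_neg, neg_div, neg_neg, mul_div_assoc, div_self hb.ne', mul_one]
  have hint : IntegrableOn (fun τ => Real.exp (-b * τ)) (Ioi a) :=
    exp_neg_integrableOn_Ioi a hb
  have htend : Tendsto (fun τ => -(Real.exp (-b * τ) / b)) atTop (nhds 0) := by
    have h3 : Tendsto (fun τ : ℝ => -b * τ) atTop atBot :=
      tendsto_id.const_mul_atTop_of_neg (neg_lt_zero.mpr hb)
    have := ((Real.tendsto_exp_atBot.comp h3).div_const b).neg
    simpa using this
  have := MeasureTheory.integral_Ioi_of_hasDerivAt_of_tendsto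
    ((hderiv a (mem_Ici.mpr le_rfl)).continuousAt.continuousWithinAt)
    (fun x hx => hderiv x (mem_Ici.mpr (le_of_lt hx))) hint htend
  rw [this]; ring

set_option synthInstance.maxHeartbeats 1000000 in
lemma myExpNorm {E : Type*} [NormedAddCommGroup E] [InnerProductSpace ℝ E]
    [CompleteSpace E] (α σ : ℝ) (S : E →L[ℝ] E) (hS : star S = -S) (v : E) :
    ‖NormedSpace.exp (σ • (α • (1 : E →L[ℝ] E) + S)) v‖ = Real.exp (α * σ) * ‖v‖ := by
  have hrw : σ • (α • (1 : E →L[ℝ] E) + S) = (α * σ) • (1 : E →L[ℝ] E) + σ • S := by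
    rw [smul_add, smul_smul, mul_comm σ α]
  have hstar : star (σ • S) = -(σ • S) := by simp [star_smul, hS]
  rw [hrw, NormedSpace.exp_add_of_commute ((Commute.one_left (σ • S)).smul_left (α * σ)),
    myExpSmulOne, smul_mul_assoc, one_mul, ContinuousLinearMap.smul_apply, norm_smul,
    Real.norm_eq_abs, abs_of_pos (Real.exp_pos _), myUnitaryNorm _ hstar]

set_option maxHeartbeats 2000000 in
set_option synthInstance.maxHeartbeats 1000000 in
theorem stmt19 (n : ℕ) (α : ℝ) (hα : 0 < α)
    (A : Matrix (Fin n) (Fin n) ℝ) (hA : Aᵀ = -A) (K : ℝ)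
    (C g : ℝ → EuclideanSpace ℝ (Fin n)) (hg : Continuous g)
    (hgb : ∀ σ ≥ (0:ℝ), ‖g σ‖ ≤ K * Real.exp (-α * σ))
    (hC : ∀ σ ≥ (0:ℝ), HasDerivAt C
      ((α • (1 : Matrix (Fin n) (Fin n) ℝ) + A).toEuclideanLin (C σ) + g σ) σ) :
    ∃ Γ : EuclideanSpace ℝ (Fin n),
      Tendsto (fun σ =>
          (NormedSpace.exp ((-σ) • (α • (1 : Matrix (Fin n) (Fin n) ℝ) + A))).toEuclideanLin
            (C σ)) atTop (nhds Γ) ∧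
      ∀ σ ≥ (0:ℝ),
        ‖C σ - (NormedSpace.exp (σ • (α • (1 : Matrix (Fin n) (Fin n) ℝ) + A))).toEuclideanLin
            Γ‖ ≤ (K / (2 * α)) * Real.exp (-α * σ) := by
  have hK : 0 ≤ K := le_trans (norm_nonneg (g 0)) (by simpa using hgb 0 le_rfl)
  have h2α : (0:ℝ) < 2 * α := by positivity
  set M : Matrix (Fin n) (Fin n) ℝ := α • (1 : Matrix (Fin n) (Fin n) ℝ) + A with hM
  set T : EuclideanSpace ℝ (Fin n) →L[ℝ] EuclideanSpace ℝ (Fin n) :=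
    Matrix.toEuclideanCLM (𝕜 := ℝ) M with hTdef
  set S : EuclideanSpace ℝ (Fin n) →L[ℝ] EuclideanSpace ℝ (Fin n) :=
    Matrix.toEuclideanCLM (𝕜 := ℝ) A with hSdef
  have hT : T = α • (1 : EuclideanSpace ℝ (Fin n) →L[ℝ] EuclideanSpace ℝ (Fin n)) + S := by
    rw [hTdef, hM, map_add, _root_.map_smul, _root_.map_one]
  have hAstar : star A = -A := by
    ext i j
    have := congrFun (congrFun hA i) j
    simpa [Matrix.star_apply, Matrix.transpose_apply] using this
  have hSstar : star S = -S := by rw [hSdef, ← map_star, hAstar, map_neg]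
  have hnorm : ∀ (σ : ℝ) v, ‖NormedSpace.exp (σ • T) v‖ = Real.exp (α * σ) * ‖v‖ := by
    intro σ v
    rw [hT]
    exact myExpNorm α σ S hSstar v
  have hE : ∀ σ : ℝ, HasDerivAt (fun τ : ℝ => NormedSpace.exp ((-τ) • T))
      ((-1 : ℝ) • (NormedSpace.exp ((-σ) • T) * T)) σ := by
    intro σ
    exact (hasDerivAt_exp_smul_const (𝕂 := ℝ) T (-σ)).scomp σ (hasDerivAt_neg σ)
  set D : ℝ → EuclideanSpace ℝ (Fin n) :=
    fun τ => NormedSpace.exp ((-τ) • T) (C τ) with hDdef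
  have hD : ∀ σ : ℝ, 0 ≤ σ → HasDerivAt D (NormedSpace.exp ((-σ) • T) (g σ)) σ := by
    intro σ hσ
    have hC' : HasDerivAt C (T (C σ) + g σ) σ := hC σ hσ
    have h1 := (hE σ).clm_apply hC'
    refine h1.congr_deriv ?_
    simp [ContinuousLinearMap.mul_apply, ContinuousLinearMap.smul_apply, map_add]
  set h : ℝ → EuclideanSpace ℝ (Fin n) :=
    fun τ => NormedSpace.exp ((-τ) • T) (g τ) with hhdef
  have hconth : Continuous h := by
    exact (NormedSpace.exp_continuous.comp (continuous_neg.smul continuous_const)).clm_apply hg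
  have hhb : ∀ τ : ℝ, 0 ≤ τ → ‖h τ‖ ≤ K * Real.exp (-(2*α) * τ) := by
    intro τ hτ
    have h1 : ‖h τ‖ = Real.exp (α * (-τ)) * ‖g τ‖ := hnorm (-τ) (g τ)
    rw [h1]
    calc Real.exp (α * (-τ)) * ‖g τ‖
        ≤ Real.exp (α * (-τ)) * (K * Real.exp (-α * τ)) :=
          mul_le_mul_of_nonneg_left (hgb τ hτ) (Real.exp_pos _).le
      _ = K * (Real.exp (α * (-τ)) * Real.exp (-α * τ)) := by ring
      _ = K * Real.exp (-(2*α) * τ) := by rw [← Real.exp_add, show α * -τ + -α * τ = -(2*α)*τ by ring]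
  have hintexp : ∀ a : ℝ, IntegrableOn (fun τ => K * Real.exp (-(2*α) * τ)) (Ioi a) := by
    intro a
    exact (exp_neg_integrableOn_Ioi a h2α).const_mul K
  have hinth : ∀ a : ℝ, 0 ≤ a → IntegrableOn h (Ioi a) := by
    intro a ha
    refine Integrable.mono (hintexp a) hconth.aestronglyMeasurable.restrict ?_
    refine (ae_restrict_iff' measurableSet_Ioi).mpr (ae_of_all _ fun τ hτ => ?_)
    calc ‖h τ‖ ≤ K * Real.exp (-(2*α) * τ) := hhb τ (ha.trans hτ.le)
      _ ≤ ‖K * Real.exp (-(2*α) * τ)‖ := le_abs_self _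
  set I : ℝ → EuclideanSpace ℝ (Fin n) := fun a => ∫ τ in Ioi a, h τ with hIdef
  have hIbound : ∀ a : ℝ, 0 ≤ a → ‖I a‖ ≤ K / (2*α) * Real.exp (-(2*α) * a) := by
    intro a ha
    have h1 : ‖I a‖ ≤ ∫ τ in Ioi a, K * Real.exp (-(2*α) * τ) := by
      refine norm_integral_le_of_norm_le (hintexp a) ?_
      exact (ae_restrict_iff' measurableSet_Ioi).mpr
        (ae_of_all _ fun τ hτ => hhb τ (ha.trans hτ.le))
    rw [integral_const_mul, myExpIntegral h2α a] at h1
    calc ‖I a‖ ≤ K * (Real.exp (-(2*α) * a) / (2*α)) := h1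
      _ = K / (2*α) * Real.exp (-(2*α) * a) := by ring
  have hcons : ∀ a b : ℝ, 0 ≤ a → a ≤ b → D b + I b = D a + I a := by
    intro a b ha hab
    have hftc : ∫ τ in a..b, h τ = D b - D a := by
      refine intervalIntegral.integral_eq_sub_of_hasDerivAt ?_ (hconth.intervalIntegrable a b)
      intro x hx
      rw [Set.uIcc_of_le hab] at hx
      exact hD x (ha.trans hx.1)
    have hsplit : (∫ τ in Ioi a, h τ) = (∫ τ in Ioc a b, h τ) + ∫ τ in Ioi b, h τ := by
      rw [← Ioc_union_Ioi_eq_Ioi hab]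
      exact setIntegral_union (Ioc_disjoint_Ioi le_rfl) measurableSet_Ioi
        ((hinth a ha).mono_set Ioc_subset_Ioi_self) (hinth b (ha.trans hab))
    have h2 : I a = (D b - D a) + I b := by
      rw [hIdef]
      simp only []
      rw [hsplit, ← intervalIntegral.integral_of_le hab, hftc]
    rw [h2]
    abel
  set Γ : EuclideanSpace ℝ (Fin n) := D 0 + I 0 with hΓdef
  have hrec : ∀ σ : ℝ, 0 ≤ σ → Γ - I σ = D σ := by
    intro σ hσ
    rw [hΓdef, ← hcons 0 σ le_rfl hσ]
    abel
  have hIto : Tendsto I atTop (nhds 0) := by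
    apply squeeze_zero_norm'
    · filter_upwards [eventually_ge_atTop (0:ℝ)] with a ha using hIbound a ha
    · have h3 : Tendsto (fun a : ℝ => -(2*α) * a) atTop atBot :=
        tendsto_id.const_mul_atTop_of_neg (neg_lt_zero.mpr h2α)
      have h4 := (Real.tendsto_exp_atBot.comp h3).const_mul (K/(2*α))
      simpa using h4
  have hDto : Tendsto D atTop (nhds Γ) := by
    have h5 : Tendsto (fun σ => Γ - I σ) atTop (nhds Γ) := by
      simpa using tendsto_const_nhds.sub hIto
    refine Tendsto.congr' ?_ h5
    filter_upwards [eventually_ge_atTop (0:ℝ)] with σ hσ using hrec σ hσ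
  refine ⟨Γ, ?_, ?_⟩
  · have hfun : (fun σ : ℝ => Matrix.toEuclideanLin (NormedSpace.exp ((-σ) • M)) (C σ)) = D := by
      funext σ
      rw [myExpApply, _root_.map_smul]
    exact hfun ▸ hDto
  · intro σ hσ
    have hCrec : NormedSpace.exp (σ • T) (D σ) = C σ := by
      have hmul : NormedSpace.exp (σ • T) * NormedSpace.exp ((-σ) • T) = 1 := by
        rw [show (-σ) • T = -(σ • T) from neg_smul σ T,
          ← NormedSpace.exp_add_of_commute (Commute.refl (σ • T)).neg_right,
          add_neg_cancel, NormedSpace.exp_zero]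
      have h6 := congrArg (fun f : EuclideanSpace ℝ (Fin n) →L[ℝ] EuclideanSpace ℝ (Fin n) =>
        f (C σ)) hmul
      simpa [ContinuousLinearMap.mul_apply] using h6
    have heq : Matrix.toEuclideanLin (NormedSpace.exp (σ • M)) Γ
        = NormedSpace.exp (σ • T) Γ := by
      rw [myExpApply, _root_.map_smul]
    rw [heq, ← hCrec, ← map_sub (NormedSpace.exp (σ • T)), hnorm σ (D σ - Γ)]
    have h7 : D σ - Γ = -(I σ) := by rw [← hrec σ hσ]; abel
    rw [h7, norm_neg]
    calc Real.exp (α * σ) * ‖I σ‖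
        ≤ Real.exp (α * σ) * (K / (2*α) * Real.exp (-(2*α) * σ)) :=
          mul_le_mul_of_nonneg_left (hIbound σ hσ) (Real.exp_pos _).le
      _ = K / (2*α) * (Real.exp (α * σ) * Real.exp (-(2*α) * σ)) := by ring
      _ = K / (2 * α) * Real.exp (-α * σ) := by rw [← Real.exp_add, show α * σ + -(2*α)*σ = -α*σ by ring]
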